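/- Let e₂ : [t₀,∞) → ℝ be differentiable, r = ė₂ + α₂e₂ with α₂ > 0, and N_d : [t₀,∞) → ℝ differentiable with |N_d(t)| ≤ ζ_N and |Ṅ_d(t)| ≤ ζ_Ṅ for all t. If β > ζ_N + ζ_Ṅ/α₂, then for all t ≥ t₀: ∫_{t₀}^{t} r(τ)(N_d(τ) − β·sgn(e₂(τ))) dτ ≤ β|e₂(t₀)| − e₂(t₀)N_d(t₀). -/

import Mathlib

open Set MeasureTheory intervalIntegral

/-- Left-derivative version of the FTC inequality, by reflection. -/
lemma integral_le_sub_of_hasDeriv_left_of_le' {g g' φ : ℝ → ℝ} {a b : ℝ} (hab : a ≤ b)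
    (hcont : ContinuousOn g (Icc a b))
    (hderiv : ∀ x ∈ Ioo a b, HasDerivWithinAt g (g' x) (Iio x) x)
    (φint : IntervalIntegrable φ volume a b)
    (hφg : ∀ x ∈ Ioo a b, φ x ≤ g' x) :
    (∫ y in a..b, φ y) ≤ g b - g a := by
  have hmaps : MapsTo (fun u : ℝ => a + b - u) (Icc a b) (Icc a b) := by
    intro u hu
    rw [mem_Icc] at hu
    constructor
    · show a ≤ a + b - u
      linarith [hu.2]
    · show a + b - u ≤ b
      linarith [hu.1]
  have key := intervalIntegral.integral_le_sub_of_hasDeriv_right_of_le (a := a) (b := b)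
    (g := fun u => -g (a + b - u)) (g' := fun u => g' (a + b - u))
    (φ := fun u => φ (a + b - u)) hab
    ((hcont.comp ((continuous_const.sub continuous_id).continuousOn) hmaps).neg)
    (fun u hu => by
      have hx : a + b - u ∈ Ioo a b := ⟨by linarith [hu.2], by linarith [hu.1]⟩
      have h1 : HasDerivWithinAt (fun w : ℝ => a + b - w) (-1) (Ioi u) u := by
        exact ((hasDerivAt_id u).const_sub (a + b)).hasDerivWithinAt
      have hmaps2 : MapsTo (fun w : ℝ => a + b - w) (Ioi u) (Iio (a + b - u)) := by
        intro w hw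
        rw [mem_Iio]
        rw [mem_Ioi] at hw
        simp only
        linarith
      have h2 := (hderiv _ hx).comp u h1 hmaps2
      have h3 := h2.neg
      rw [show g' (a + b - u) = -(g' (a + b - u) * -1) by ring]
      exact h3)
    (by
      have := (φint.comp_sub_left (a + b)).symm
      simp only [add_sub_cancel_left, add_sub_cancel_right] at this
      exact (intervalIntegrable_iff_integrableOn_Icc_of_le hab).1 this)
    (fun u hu => hφg _ ⟨by linarith [hu.2], by linarith [hu.1]⟩)
  have hchg : (∫ y in a..b, φ (a + b - y)) = ∫ y in a..b, φ y := by
    rw [intervalIntegral.integral_comp_sub_left φ (a + b)]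
    norm_num
  rw [hchg] at key
  simp only [add_sub_cancel_left, add_sub_cancel_right] at key
  linarith

/-- Left derivative of `|e|`. -/
lemma hasDerivWithinAt_abs_left {e e' : ℝ → ℝ} (he : ∀ t, HasDerivAt e (e' t) t) (x : ℝ) :
    HasDerivWithinAt (fun y => |e y|)
      (if e x = 0 then -|e' x| else e' x * Real.sign (e x)) (Iio x) x := by
  rcases lt_trichotomy (e x) 0 with hneg | hzero | hpos
  · rw [if_neg hneg.ne, Real.sign_of_neg hneg]
    have hev : ∀ᶠ y in nhds x, |e y| = -e y := by
      have : {y | e y < 0} ∈ nhds x := (he x).continuousAt.preimage_mem_nhds (Iio_mem_nhds hneg)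
      filter_upwards [this] with y hy
      exact abs_of_neg hy
    have h1 : HasDerivAt (fun y => |e y|) (-(e' x)) x :=
      ((he x).neg).congr_of_eventuallyEq hev
    have h2 : e' x * (-1) = -(e' x) := by ring
    rw [h2]
    exact h1.hasDerivWithinAt
  · rw [if_pos hzero]
    rw [hasDerivWithinAt_iff_isLittleO]
    have h0 : (fun y => e y - (y - x) * e' x) =o[nhds x] fun y => y - x := by
      have := hasDerivAt_iff_isLittleO.1 (he x)
      simpa [hzero, smul_eq_mul] using this
    have hO : (fun y => |e y| - |e x| - (y - x) • (-|e' x|)) =O[nhdsWithin x (Iio x)]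
        fun y => e y - (y - x) * e' x := by
      apply Asymptotics.IsBigO.of_bound 1
      filter_upwards [self_mem_nhdsWithin] with y hy
      rw [mem_Iio] at hy
      have h1 : |(y - x) * e' x| = (x - y) * |e' x| := by
        rw [abs_mul, abs_of_neg (by linarith : y - x < 0)]
        ring
      have h2 : |e y| - |e x| - (y - x) • (-|e' x|) = |e y| - |(y - x) * e' x| := by
        rw [hzero, h1, smul_eq_mul, abs_zero]
        ring
      rw [Real.norm_eq_abs, Real.norm_eq_abs, h2, one_mul]
      exact abs_abs_sub_abs_le_abs_sub _ _
    exact hO.trans_isLittleO (h0.mono nhdsWithin_le_nhds)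
  · rw [if_neg hpos.ne', Real.sign_of_pos hpos, mul_one]
    have hev : ∀ᶠ y in nhds x, |e y| = e y := by
      have : {y | 0 < e y} ∈ nhds x := (he x).continuousAt.preimage_mem_nhds (Ioi_mem_nhds hpos)
      filter_upwards [this] with y hy
      exact abs_of_pos hy
    exact ((he x).congr_of_eventuallyEq hev).hasDerivWithinAt

theorem arise_integral_bound
    (t₀ α₂ β ζN ζN' : ℝ) (hα₂ : 0 < α₂)
    (e₂ e₂' Nd Nd' : ℝ → ℝ)
    (he₂ : ∀ t, HasDerivAt e₂ (e₂' t) t)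
    (hNd : ∀ t, HasDerivAt Nd (Nd' t) t)
    (hNdb : ∀ t, |Nd t| ≤ ζN) (hNd'b : ∀ t, |Nd' t| ≤ ζN')
    (hβ : ζN + ζN' / α₂ < β) :
    ∀ t, t₀ ≤ t →
      (∫ τ in t₀..t, (e₂' τ + α₂ * e₂ τ) * (Nd τ - β * Real.sign (e₂ τ)))
        ≤ β * |e₂ t₀| - e₂ t₀ * Nd t₀ := by
  intro t ht
  have hζN : 0 ≤ ζN := le_trans (abs_nonneg _) (hNdb 0)
  have hζN' : 0 ≤ ζN' := le_trans (abs_nonneg _) (hNd'b 0)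
  have hβpos : 0 < β := lt_of_le_of_lt (by positivity) hβ
  have hzz : α₂ * ζN + ζN' ≤ α₂ * β := by
    have h1 := mul_lt_mul_of_pos_left hβ hα₂
    have h2 : α₂ * (ζN' / α₂) = ζN' := by field_simp
    nlinarith
  have hβζ : ζN ≤ β := by nlinarith
  have hbnd : ∀ u, e₂ u * Nd u ≤ |e₂ u| * ζN := by
    intro u
    calc e₂ u * Nd u ≤ |e₂ u * Nd u| := le_abs_self _
      _ = |e₂ u| * |Nd u| := abs_mul _ _
      _ ≤ |e₂ u| * ζN := mul_le_mul_of_nonneg_left (hNdb u) (abs_nonneg _)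
  have hbnd' : ∀ u, -(e₂ u * Nd' u) ≤ |e₂ u| * ζN' := by
    intro u
    calc -(e₂ u * Nd' u) ≤ |e₂ u * Nd' u| := neg_le_abs _
      _ = |e₂ u| * |Nd' u| := abs_mul _ _
      _ ≤ |e₂ u| * ζN' := mul_le_mul_of_nonneg_left (hNd'b u) (abs_nonneg _)
  have hRHS0 : 0 ≤ β * |e₂ t₀| - e₂ t₀ * Nd t₀ := by
    nlinarith [abs_nonneg (e₂ t₀), hbnd t₀]
  by_cases hL : IntervalIntegrable
      (fun τ => (e₂' τ + α₂ * e₂ τ) * (Nd τ - β * Real.sign (e₂ τ))) volume t₀ t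
  swap
  · rw [intervalIntegral.integral_undef hL]; exact hRHS0
  have hce₂ : Continuous e₂ := by
    rw [continuous_iff_continuousAt]; exact fun u => (he₂ u).continuousAt
  have hcNd : Continuous Nd := by
    rw [continuous_iff_continuousAt]; exact fun u => (hNd u).continuousAt
  have hNd'meas : Measurable Nd' := by
    have h : Nd' = deriv Nd := funext fun u => ((hNd u).deriv).symm
    rw [h]; exact measurable_deriv _
  have hc2 : IntervalIntegrable (fun τ => e₂ τ * Nd' τ) volume t₀ t := by
    rw [intervalIntegrable_iff_integrableOn_Icc_of_le ht]
    apply Integrable.mono' ((continuous_const.mul hce₂.abs).integrableOn_Icc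
      (μ := volume) (a := t₀) (b := t) : IntegrableOn (fun τ => ζN' * |e₂ τ|) _ _)
    · exact ((hce₂.measurable.mul hNd'meas)).aestronglyMeasurable
    · apply ae_of_all
      intro u
      rw [Real.norm_eq_abs, abs_mul, mul_comm]
      exact mul_le_mul_of_nonneg_right (hNd'b u) (abs_nonneg _)
  have hψint : IntervalIntegrable
      (fun τ => α₂ * e₂ τ * Nd τ - e₂ τ * Nd' τ - α₂ * β * |e₂ τ|) volume t₀ t := by
    apply IntervalIntegrable.sub
    apply IntervalIntegrable.sub
    · exact ((continuous_const.mul hce₂).mul hcNd).intervalIntegrable _ _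
    · exact hc2
    · exact (continuous_const.mul hce₂.abs).intervalIntegrable _ _
  have hφint : IntervalIntegrable
      (fun τ => (e₂' τ + α₂ * e₂ τ) * (Nd τ - β * Real.sign (e₂ τ))
        - (α₂ * e₂ τ * Nd τ - e₂ τ * Nd' τ - α₂ * β * |e₂ τ|)) volume t₀ t := hL.sub hψint
  have key := integral_le_sub_of_hasDeriv_left_of_le'
    (g := fun x => e₂ x * Nd x - β * |e₂ x|)
    (g' := fun x => e₂' x * Nd x + e₂ x * Nd' x
      - β * (if e₂ x = 0 then -|e₂' x| else e₂' x * Real.sign (e₂ x)))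
    (φ := fun τ => (e₂' τ + α₂ * e₂ τ) * (Nd τ - β * Real.sign (e₂ τ))
        - (α₂ * e₂ τ * Nd τ - e₂ τ * Nd' τ - α₂ * β * |e₂ τ|))
    ht
    (((hce₂.mul hcNd).sub (continuous_const.mul hce₂.abs)).continuousOn)
    (fun x _ => by
      have h1 := ((he₂ x).mul (hNd x)).hasDerivWithinAt (s := Iio x)
      have h2 := (hasDerivWithinAt_abs_left he₂ x).const_mul β
      exact h1.sub h2)
    hφint
    (fun x _ => by
      rcases lt_trichotomy (e₂ x) 0 with hneg | hzero | hpos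
      · rw [if_neg hneg.ne, Real.sign_of_neg hneg, abs_of_neg hneg]
        nlinarith [sq_nonneg (e₂ x)]
      · rw [if_pos hzero, hzero, Real.sign_zero, abs_zero]
        nlinarith [mul_nonneg hβpos.le (abs_nonneg (e₂' x))]
      · rw [if_neg hpos.ne', Real.sign_of_pos hpos, abs_of_pos hpos]
        nlinarith [sq_nonneg (e₂ x)])
  have hsplit : (∫ τ in t₀..t, (e₂' τ + α₂ * e₂ τ) * (Nd τ - β * Real.sign (e₂ τ)))
      = (∫ τ in t₀..t, ((e₂' τ + α₂ * e₂ τ) * (Nd τ - β * Real.sign (e₂ τ))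
        - (α₂ * e₂ τ * Nd τ - e₂ τ * Nd' τ - α₂ * β * |e₂ τ|)))
      + ∫ τ in t₀..t, (α₂ * e₂ τ * Nd τ - e₂ τ * Nd' τ - α₂ * β * |e₂ τ|) := by
    rw [← intervalIntegral.integral_add hφint hψint]
    apply intervalIntegral.integral_congr
    intro x _
    simp only
    ring
  have hψle : (∫ τ in t₀..t, (α₂ * e₂ τ * Nd τ - e₂ τ * Nd' τ - α₂ * β * |e₂ τ|)) ≤ 0 := by
    have h := intervalIntegral.integral_nonneg (μ := volume)
      (f := fun τ => -(α₂ * e₂ τ * Nd τ - e₂ τ * Nd' τ - α₂ * β * |e₂ τ|)) ht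
      (fun u _ => by
        nlinarith [hbnd u, hbnd' u, abs_nonneg (e₂ u),
          mul_le_mul_of_nonneg_left (hbnd u) hα₂.le,
          mul_le_mul_of_nonneg_left hzz (abs_nonneg (e₂ u))])
    rw [intervalIntegral.integral_neg] at h
    linarith
  have hgt : e₂ t * Nd t ≤ β * |e₂ t| := by
    nlinarith [hbnd t, abs_nonneg (e₂ t)]
  linarith [key, hsplit, hψle, hgt]
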